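/- Let m = 2r, n = 2s+1, r ≥ n + 1, X = {0,...,r-1}, Y = {r,...,2r-1}, f(x) = r + x. Let A, B ⊆ X be n-subsets with A ∩ B ≠ ∅ and A ≠ B. Then there exists an n-subset C of [m] such that C ∩ A = ∅ and C = {i} ∪ f(B \ {i}) for some i ∈ B \ A. In particular, every vertex A with A ⊆ X has, for every color class B ⊆ X of the coloring h from the odd case construction, a neighbor colored B. -/
import Mathlib


open Finset

/-- with `m = 2r`, `n = 2s+1`, `r ≥ n+1`, `X = {0,…,r-1}` and
`f x = x + r`, if `A, B ⊆ X` are `n`-subsets with `A ∩ B ≠ ∅` and `A ≠ B`, then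
there is `i ∈ B \ A` such that `C = {i} ∪ f(B \ {i})` is an `n`-subset of
`[2r]` disjoint from `A`. -/
theorem stmt9 (r s n : ℕ) (hn : n = 2 * s + 1) (hr : n + 1 ≤ r)
    (A B : Finset ℕ) (hAX : A ⊆ Finset.range r) (hBX : B ⊆ Finset.range r)
    (hA : A.card = n) (hB : B.card = n)
    (hmeet : (A ∩ B).Nonempty) (hne : A ≠ B) :
    ∃ i ∈ B, i ∉ A ∧
      letI C : Finset ℕ := insert i ((B.erase i).image (· + r))
      C ⊆ Finset.range (2 * r) ∧ C.card = n ∧ Disjoint C A := by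
  -- find i ∈ B \ A
  have hBA : (B \ A).Nonempty := by
    rw [sdiff_nonempty]
    intro hsub
    exact hne ((Finset.eq_of_subset_of_card_le hsub (by omega)).symm)
  obtain ⟨i, hi⟩ := hBA
  rw [mem_sdiff] at hi
  obtain ⟨hiB, hiA⟩ := hi
  refine ⟨i, hiB, hiA, ?_, ?_, ?_⟩
  · intro x hx
    rcases mem_insert.mp hx with h | h
    · subst h
      exact mem_range.mpr (lt_of_lt_of_le (mem_range.mp (hBX hiB)) (by omega))
    · obtain ⟨b, hb, rfl⟩ := mem_image.mp h
      have := mem_range.mp (hBX (mem_of_mem_erase hb))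
      exact mem_range.mpr (by omega)
  · have hinotin : i ∉ (B.erase i).image (· + r) := by
      intro h
      obtain ⟨b, hb, heq⟩ := mem_image.mp h
      have := mem_range.mp (hBX hiB)
      omega
    rw [card_insert_of_notMem hinotin,
      card_image_of_injective _ (fun a b h => by omega),
      card_erase_of_mem hiB, hB]
    omega
  · rw [disjoint_left]
    intro x hx hxA
    rcases mem_insert.mp hx with h | h
    · exact hiA (h ▸ hxA)
    · obtain ⟨b, hb, rfl⟩ := mem_image.mp h
      have := mem_range.mp (hAX hxA)
      omega
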